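/- If q̂ ≤ q̂' and p̂ ≥ p̂', then the deletion confidence satisfies ρ(q̂', p̂') ≤ ρ(q̂, p̂), where ρ(q, p) = 1 - Σ_{k=0}^{n} C(n,k)·p^k·(1-p)^{n-k}·H(Σ_{l=0}^{k} C(n,l)·q^l·(1-q)^{n-l} ≤ 1-α). -/

import Mathlib

open Finset

/-- The binomial probability mass `C(n,k) r^k (1-r)^(n-k)`. -/
noncomputable def binomTerm (n : ℕ) (r : ℝ) (k : ℕ) : ℝ :=
  (n.choose k : ℝ) * r ^ k * (1 - r) ^ (n - k)

/-- The binomial CDF `F_q(k) = Σ_{l=0}^{k} C(n,l) q^l (1-q)^(n-l)`. -/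
noncomputable def binomCDF (n : ℕ) (q : ℝ) (k : ℕ) : ℝ :=
  ∑ l ∈ Finset.range (k + 1), binomTerm n q l

lemma nat1 (n m : ℕ) : n * (n-1).choose m = n.choose (m+1) * (m+1) := by
  cases n with
  | zero => simp
  | succ j => simpa using Nat.add_one_mul_choose_eq j m

lemma nat2 (n m : ℕ) : n * (n-1).choose (m+1) = n.choose (m+1) * (n - (m+1)) := by
  cases n with
  | zero => simp
  | succ j =>
    simp only [Nat.add_sub_cancel]
    calc (j+1) * j.choose (m+1) = (j+1).choose (m+1+1) * (m+1+1) :=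
          Nat.add_one_mul_choose_eq j (m+1)
      _ = (j+1).choose (m+1) * (j+1 - (m+1)) := Nat.choose_succ_right_eq (j+1) (m+1)

lemma hasDerivAt_binomTerm (n l : ℕ) (q : ℝ) :
    HasDerivAt (fun q => binomTerm n q l)
      ((n:ℝ) * ((if l = 0 then 0 else binomTerm (n-1) q (l-1)) - binomTerm (n-1) q l)) q := by
  have h1 : HasDerivAt (fun q : ℝ => q ^ l) ((l:ℝ) * q ^ (l-1)) q := hasDerivAt_pow l q
  have h2 : HasDerivAt (fun q : ℝ => (1-q) ^ (n-l))
      (((n-l:ℕ):ℝ) * (1-q) ^ (n-l-1) * (-1)) q :=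
    (((hasDerivAt_id q).const_sub 1)).pow (n-l)
  have h := ((h1.const_mul ((n.choose l : ℕ):ℝ)).fun_mul h2)
  refine h.congr_deriv (Eq.symm ?_)
  cases l with
  | zero =>
    simp only [binomTerm, if_pos rfl, Nat.sub_zero, Nat.choose_zero_right]
    push_cast
    ring
  | succ m =>
    simp only [binomTerm, Nat.add_sub_cancel, if_neg (Nat.succ_ne_zero m)]
    have e1 : (n:ℝ) * (((n-1).choose m : ℕ) : ℝ) = ((n.choose (m+1) : ℕ) : ℝ) * (((m+1:ℕ):ℕ):ℝ) := by
      exact_mod_cast congrArg (Nat.cast (R := ℝ)) (nat1 n m)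
    have e2 : (n:ℝ) * (((n-1).choose (m+1) : ℕ) : ℝ) = ((n.choose (m+1) : ℕ) : ℝ) * (((n - (m+1):ℕ):ℕ):ℝ) := by
      exact_mod_cast congrArg (Nat.cast (R := ℝ)) (nat2 n m)
    have e3 : n - 1 - m = n - (m+1) := by omega
    have e4 : n - 1 - (m+1) = n - (m+1) - 1 := by omega
    rw [e3, e4]
    push_cast at e1 e2 ⊢
    linear_combination (q^m * (1-q)^(n-(m+1))) * e1 - (q^(m+1) * (1-q)^(n-(m+1)-1)) * e2

lemma sum_tele (n k : ℕ) (q : ℝ) :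
    ∑ l ∈ Finset.range (k+1),
      (n:ℝ) * ((if l = 0 then 0 else binomTerm (n-1) q (l-1)) - binomTerm (n-1) q l)
    = -(n:ℝ) * binomTerm (n-1) q k := by
  induction k with
  | zero => simp
  | succ k ih =>
    rw [Finset.sum_range_succ, ih, if_neg (Nat.succ_ne_zero k)]
    simp only [Nat.add_sub_cancel]
    ring

lemma hasDerivAt_binomCDF (n k : ℕ) (q : ℝ) :
    HasDerivAt (fun q => binomCDF n q k) (-(n:ℝ) * binomTerm (n-1) q k) q := by
  rw [← sum_tele n k q]
  exact HasDerivAt.fun_sum (fun l _ => hasDerivAt_binomTerm n l q)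

lemma binomTerm_nonneg (n : ℕ) {r : ℝ} (h0 : 0 ≤ r) (h1 : r ≤ 1) (k : ℕ) :
    0 ≤ binomTerm n r k := by
  unfold binomTerm
  have : (0:ℝ) ≤ 1 - r := by linarith
  positivity

lemma binomCDF_anti (n k : ℕ) : AntitoneOn (fun q => binomCDF n q k) (Set.Icc 0 1) := by
  apply antitoneOn_of_deriv_nonpos (convex_Icc 0 1)
  · exact (Differentiable.continuous (fun q => (hasDerivAt_binomCDF n k q).differentiableAt)).continuousOn
  · exact fun x _ => (hasDerivAt_binomCDF n k x).differentiableAt.differentiableWithinAt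
  · intro x hx
    rw [interior_Icc, Set.mem_Ioo] at hx
    rw [(hasDerivAt_binomCDF n k x).deriv]
    have := binomTerm_nonneg (n-1) hx.1.le hx.2.le k
    nlinarith [Nat.cast_nonneg (α := ℝ) n]

lemma binomCDF_mono_k (n : ℕ) {q : ℝ} (h0 : 0 ≤ q) (h1 : q ≤ 1) {k K : ℕ} (h : k ≤ K) :
    binomCDF n q k ≤ binomCDF n q K := by
  apply Finset.sum_le_sum_of_subset_of_nonneg
  · exact Finset.range_subset_range.mpr (by omega)
  · exact fun i _ _ => binomTerm_nonneg n h0 h1 i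

/-- The Type-II error `β(p,q)` of the threshold test. -/
noncomputable def typeIIError (n : ℕ) (α p q : ℝ) : ℝ :=
  ∑ k ∈ Finset.range (n + 1),
    binomTerm n p k * (if binomCDF n q k ≤ 1 - α then 1 else 0)

/-- Overestimating `q` and underestimating `p` lower-bounds the deletion confidence:
if `q̂ ≤ q̂'` and `p̂' ≤ p̂` then `ρ(q̂', p̂') ≤ ρ(q̂, p̂)`. -/
theorem deletionConfidence_bound (n : ℕ) (α : ℝ) (qh qh' ph ph' : ℝ)
    (hα0 : 0 ≤ α) (hα1 : α ≤ 1)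
    (hqh0 : 0 ≤ qh) (hqh'1 : qh' ≤ 1) (hph'0 : 0 ≤ ph') (hph1 : ph ≤ 1)
    (hq : qh ≤ qh') (hp : ph' ≤ ph) :
    1 - typeIIError n α ph' qh' ≤ 1 - typeIIError n α ph qh := by
  have hqh'0 : 0 ≤ qh' := le_trans hqh0 hq
  have hqh1 : qh ≤ 1 := le_trans hq hqh'1
  have hph0 : 0 ≤ ph := le_trans hph'0 hp
  have hph'1 : ph' ≤ 1 := le_trans hp hph1
  have key : typeIIError n α ph qh ≤ typeIIError n α ph' qh' := by
    have step1 : typeIIError n α ph qh ≤ typeIIError n α ph' qh := by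
      set S := (Finset.range (n+1)).filter (fun k => binomCDF n qh k ≤ 1 - α) with hS
      have hrw : ∀ p : ℝ, typeIIError n α p qh = ∑ k ∈ S, binomTerm n p k := by
        intro p
        rw [hS, Finset.sum_filter, typeIIError]
        apply Finset.sum_congr rfl
        intro k _
        by_cases h : binomCDF n qh k ≤ 1 - α <;> simp [h]
      rw [hrw ph, hrw ph']
      by_cases hne : S.Nonempty
      · set K := S.max' hne with hK
        have hKmem : K ∈ S := S.max'_mem hne
        have hKn : K ≤ n := by
          have := (Finset.mem_filter.mp hKmem).1
          simpa [Nat.lt_succ_iff] using Finset.mem_range.mp this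
        have hKle : binomCDF n qh K ≤ 1 - α := (Finset.mem_filter.mp hKmem).2
        have hSeq : S = Finset.range (K+1) := by
          ext k
          simp only [hS, Finset.mem_filter, Finset.mem_range, Nat.lt_succ_iff]
          constructor
          · intro ⟨h1, h2⟩
            exact Finset.le_max' S k (Finset.mem_filter.mpr ⟨Finset.mem_range.mpr (by omega), h2⟩)
          · intro hk
            exact ⟨by omega, le_trans (binomCDF_mono_k n hqh0 hqh1 hk) hKle⟩
        rw [hSeq]
        exact binomCDF_anti n K ⟨hph'0, hph'1⟩ ⟨hph0, hph1⟩ hp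
      · rw [Finset.not_nonempty_iff_eq_empty.mp hne]
        simp
    have step2 : typeIIError n α ph' qh ≤ typeIIError n α ph' qh' := by
      apply Finset.sum_le_sum
      intro k _
      have hbt := binomTerm_nonneg n hph'0 hph'1 k
      by_cases h : binomCDF n qh k ≤ 1 - α
      · have h' : binomCDF n qh' k ≤ 1 - α :=
          le_trans (binomCDF_anti n k ⟨hqh0, hqh1⟩ ⟨hqh'0, hqh'1⟩ hq) h
        simp [h, h']
      · by_cases h' : binomCDF n qh' k ≤ 1 - α <;> simp [h, h'] <;> linarith
    linarith
  linarith
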